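/- arXiv:0907.4563 — 2 statements merged into one kernel-verified Lean document; each statement's English description precedes it below -/
import Mathlib

section
/- Let φ(n) = Σ_{σ ∈ S_n} (-1)^{d(σ)}. For n ≥ 3 and 2 ≤ i ≤ n-1, the sum of (-1)^{d(σ)} over all permutations σ ∈ S_n whose value n occurs in position i equals -C(n-1, i-1) · φ(i-1) · φ(n-i). -/
set_option maxHeartbeats 1600000


/-- The descent number of a list: the number of indices `i` with `l.get (i+1) < l.get i`. -/
def descList (l : List ℕ) : ℕ := (l.zip l.tail).countP fun p => decide (p.2 < p.1)

/-- The descent number of a permutation of `{1,…,n}`, read as the word `σ(1) … σ(n)`. -/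
def permDesc {n : ℕ} (σ : Equiv.Perm (Fin n)) : ℕ :=
  descList ((List.finRange n).map fun i => ((σ i : Fin n) : ℕ))

/-- The signed descent sum `φ(n) = Σ_{σ ∈ S_n} (-1)^{d(σ)}`. -/
def phi (n : ℕ) : ℤ := ∑ σ : Equiv.Perm (Fin n), (-1) ^ permDesc σ

lemma descList_cons_cons (a b : ℕ) (l : List ℕ) :
    descList (a :: b :: l) = (if b < a then 1 else 0) + descList (b :: l) := by
  simp only [descList, List.tail_cons, List.zip_cons_cons, List.countP_cons,
    decide_eq_true_eq]
  rw [Nat.add_comm]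

lemma descList_append (b : ℕ) (B : List ℕ) :
    ∀ (A : List ℕ) (hA : A ≠ []),
    descList (A ++ b :: B) = descList A + ((if b < A.getLast hA then 1 else 0) + descList (b :: B))
  | [], hA => absurd rfl hA
  | [a], _ => by
    simp only [List.singleton_append, List.getLast_singleton, descList_cons_cons]
    simp [descList]
    congr
  | (a :: a' :: A'), _ => by
    have ih := descList_append b B (a' :: A') (by simp)
    simp only [List.cons_append] at ih ⊢
    rw [descList_cons_cons, ih, descList_cons_cons]
    have : (a :: a' :: A').getLast (by simp) = (a' :: A').getLast (by simp) := by
      simp [List.getLast_cons]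
    rw [this]; ring

lemma descList_map_of_rel {γ : Type*} (l : List γ) (f g : γ → ℕ)
    (h : ∀ a b : γ, (f a < f b ↔ g a < g b)) :
    descList (l.map f) = descList (l.map g) := by
  unfold descList
  rw [← List.map_tail, ← List.map_tail, List.zip_map, List.zip_map, List.countP_map,
    List.countP_map]
  apply List.countP_congr
  intro p _
  simp only [Function.comp_apply, decide_eq_true_eq]
  constructor <;> intro <;> simp_all [h]

open Finset in
lemma card_compl_eq (m p : ℕ) (S : Finset (Fin m)) (hS : S.card = p) : Sᶜ.card = m - p := by
  simp [Finset.card_compl, hS]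

def Ffun (m p : ℕ) (hpm : p < m) (S : Finset (Fin m)) (hS : S.card = p)
    (α : Equiv.Perm (Fin p)) (β : Equiv.Perm (Fin (m - p))) : Fin (m+1) → Fin (m+1) :=
  fun j =>
    if h : j.val < p then Fin.castSucc (S.orderEmbOfFin hS (α ⟨j.val, h⟩))
    else if h' : j.val = p then Fin.last m
    else Fin.castSucc (Sᶜ.orderEmbOfFin (card_compl_eq m p S hS)
      (β ⟨j.val - p - 1, by omega⟩))

lemma Ffun_injective (m p : ℕ) (hpm : p < m) (S : Finset (Fin m)) (hS : S.card = p)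
    (α : Equiv.Perm (Fin p)) (β : Equiv.Perm (Fin (m - p))) :
    Function.Injective (Ffun m p hpm S hS α β) := by
  intro j1 j2 hj
  unfold Ffun at hj
  have hmemS : ∀ k, S.orderEmbOfFin hS (α k) ∈ S := fun k => Finset.orderEmbOfFin_mem _ _ _
  have hmemC : ∀ k, Sᶜ.orderEmbOfFin (card_compl_eq m p S hS) (β k) ∈ Sᶜ := fun k =>
    Finset.orderEmbOfFin_mem _ _ _
  have hne : ∀ x : Fin m, Fin.castSucc x ≠ Fin.last m := fun x => (Fin.castSucc_lt_last x).ne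
  split_ifs at hj with h1 h2 h3 h4 h5 h6 h7 h8
  · -- S S
    have h := (S.orderEmbOfFin hS).injective (Fin.castSucc_inj.mp hj)
    have h' := α.injective h
    exact Fin.ext (by simpa [Fin.ext_iff] using h')
  · exact absurd hj (hne _)
  · -- S C
    exfalso
    have hm1 : S.orderEmbOfFin hS (α ⟨j1.val, h1⟩) ∈ S := Finset.orderEmbOfFin_mem _ _ _
    rw [Fin.castSucc_inj.mp hj] at hm1
    exact absurd hm1 (Finset.mem_compl.mp (hmemC _))
  · exact absurd hj.symm (hne _)
  · exact Fin.ext (by omega)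
  · exact absurd hj.symm (hne _)
  · -- C S
    exfalso
    have hm1 : S.orderEmbOfFin hS (α ⟨j2.val, h7⟩) ∈ S := Finset.orderEmbOfFin_mem _ _ _
    rw [← Fin.castSucc_inj.mp hj] at hm1
    exact absurd hm1 (Finset.mem_compl.mp (hmemC _))
  · exact absurd hj (hne _)
  · -- C C
    have h := (Sᶜ.orderEmbOfFin (card_compl_eq m p S hS)).injective (Fin.castSucc_inj.mp hj)
    have h' := β.injective h
    exact Fin.ext (by simp [Fin.ext_iff] at h' ⊢; omega)

noncomputable def Fperm (m p : ℕ) (hpm : p < m) (S : Finset (Fin m)) (hS : S.card = p)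
    (α : Equiv.Perm (Fin p)) (β : Equiv.Perm (Fin (m - p))) : Equiv.Perm (Fin (m+1)) :=
  Equiv.ofBijective _ (Finite.injective_iff_bijective.mp (Ffun_injective m p hpm S hS α β))

lemma Fperm_apply (m p : ℕ) (hpm : p < m) (S : Finset (Fin m)) (hS : S.card = p)
    (α : Equiv.Perm (Fin p)) (β : Equiv.Perm (Fin (m - p))) (j : Fin (m+1)) :
    Fperm m p hpm S hS α β j = Ffun m p hpm S hS α β j := rfl

lemma word_Fperm (m p : ℕ) (hpm : p < m) (S : Finset (Fin m)) (hS : S.card = p)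
    (α : Equiv.Perm (Fin p)) (β : Equiv.Perm (Fin (m - p))) :
    ((List.finRange (m+1)).map fun j => ((Fperm m p hpm S hS α β j : Fin (m+1)) : ℕ))
    = ((List.finRange p).map fun k => ((S.orderEmbOfFin hS (α k) : Fin m) : ℕ))
      ++ m :: ((List.finRange (m-p)).map fun k =>
          ((Sᶜ.orderEmbOfFin (card_compl_eq m p S hS) (β k) : Fin m) : ℕ)) := by
  apply List.ext_getElem
  · simp; omega
  intro k h1 h2
  simp only [List.getElem_map, List.getElem_finRange]
  by_cases hk : k < p
  · rw [List.getElem_append_left (by simpa using hk)]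
    simp only [List.getElem_map, List.getElem_finRange]
    rw [Fperm_apply]
    unfold Ffun
    rw [dif_pos (by simpa using hk)]
    simp
  · rw [List.getElem_append_right (by simp only [List.length_map, List.length_finRange]; omega)]
    simp only [List.length_map, List.length_finRange]
    by_cases hk2 : k = p
    · subst hk2
      simp only [Nat.sub_self, List.getElem_cons_zero]
      rw [Fperm_apply]; unfold Ffun
      rw [dif_neg (by simp), dif_pos (by simp)]
      simp
    · have hkp : p < k := by omega
      rw [List.getElem_cons]
      rw [dif_neg (by omega)]
      simp only [List.getElem_map, List.getElem_finRange]
      rw [Fperm_apply]; unfold Ffun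
      rw [dif_neg (by simp; omega), dif_neg (by simp; omega)]
      simp

lemma permDesc_eq_descList_map {k : ℕ} (α : Equiv.Perm (Fin k)) {m : ℕ} (e : Fin k ↪o Fin m) :
    descList ((List.finRange k).map fun j => ((e (α j) : Fin m) : ℕ)) = permDesc α := by
  have h1 : ((List.finRange k).map fun j => ((e (α j) : Fin m) : ℕ))
      = ((List.finRange k).map α).map (fun x => ((e x : Fin m) : ℕ)) := by
    rw [List.map_map]; rfl
  have h2 : permDesc α = descList (((List.finRange k).map α).map (fun x : Fin k => (x : ℕ))) := by
    unfold permDesc; rw [List.map_map]; rfl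
  rw [h1, h2]
  apply descList_map_of_rel
  intro a b
  rw [← Fin.lt_iff_val_lt_val, ← Fin.lt_iff_val_lt_val, e.lt_iff_lt]

lemma permDesc_Fperm (m p : ℕ) (hp : 1 ≤ p) (hpm : p < m) (S : Finset (Fin m))
    (hS : S.card = p) (α : Equiv.Perm (Fin p)) (β : Equiv.Perm (Fin (m - p))) :
    permDesc (Fperm m p hpm S hS α β) = permDesc α + permDesc β + 1 := by
  unfold permDesc
  rw [word_Fperm]
  set LA := ((List.finRange p).map fun k => ((S.orderEmbOfFin hS (α k) : Fin m) : ℕ)) with hLA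
  set LB := ((List.finRange (m-p)).map fun k =>
      ((Sᶜ.orderEmbOfFin (card_compl_eq m p S hS) (β k) : Fin m) : ℕ)) with hLB
  have hLAlt : ∀ x ∈ LA, x < m := by
    intro x hx
    rw [hLA] at hx
    simp only [List.mem_map] at hx
    obtain ⟨j, _, rfl⟩ := hx
    exact (S.orderEmbOfFin hS (α j)).isLt
  have hLBlt : ∀ x ∈ LB, x < m := by
    intro x hx
    rw [hLB] at hx
    simp only [List.mem_map] at hx
    obtain ⟨j, _, rfl⟩ := hx
    exact (Sᶜ.orderEmbOfFin _ (β j)).isLt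
  have hLAne : LA ≠ [] := by
    rw [hLA]; intro h
    have := congrArg List.length h
    simp at this; omega
  have hLBne : LB ≠ [] := by
    rw [hLB]; intro h
    have := congrArg List.length h
    simp at this; omega
  rw [descList_append m LB LA hLAne]
  have hite : (if m < LA.getLast hLAne then 1 else 0) = 0 := by
    rw [if_neg]
    have := hLAlt _ (List.getLast_mem hLAne)
    omega
  rw [hite]
  have hmLB : descList (m :: LB) = descList LB + 1 := by
    obtain ⟨c, LB', hcons⟩ := List.exists_cons_of_ne_nil hLBne
    have hc : c < m := hLBlt c (by rw [hcons]; simp)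
    rw [hcons, descList_cons_cons, if_pos hc]
    omega
  rw [hmLB]
  have hA : descList LA = permDesc α := permDesc_eq_descList_map α (S.orderEmbOfFin hS)
  have hB : descList LB = permDesc β := permDesc_eq_descList_map β (Sᶜ.orderEmbOfFin _)
  rw [hA, hB]; unfold permDesc; ring

def posL (m p : ℕ) (hpm : p < m) (k : Fin p) : Fin (m+1) := ⟨k.val, by omega⟩
def posM (m p : ℕ) (hpm : p < m) : Fin (m+1) := ⟨p, by omega⟩
def posR (m p : ℕ) (k : Fin (m-p)) : Fin (m+1) := ⟨p+1+k.val, by have := k.isLt; omega⟩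

def low (m : ℕ) (hm : 0 < m) (x : Fin (m+1)) : Fin m :=
  if h : x.val < m then ⟨x.val, h⟩ else ⟨0, hm⟩

lemma low_castSucc (m : ℕ) (hm : 0 < m) (y : Fin m) :
    low m hm (Fin.castSucc y) = y := by
  unfold low
  rw [dif_pos (by simpa using y.isLt)]
  apply Fin.ext; simp

lemma castSucc_low (m : ℕ) (hm : 0 < m) (x : Fin (m+1)) (hx : x.val < m) :
    Fin.castSucc (low m hm x) = x := by
  unfold low
  rw [dif_pos hx]
  apply Fin.ext; simp

lemma low_val (m : ℕ) (hm : 0 < m) (x : Fin (m+1)) (hx : x.val < m) :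
    (low m hm x).val = x.val := by
  unfold low; rw [dif_pos hx]

def Im (m p : ℕ) (hpm : p < m) (σ : Equiv.Perm (Fin (m+1))) : Finset (Fin m) :=
  Finset.image (fun k : Fin p => low m (by omega) (σ (posL m p hpm k))) Finset.univ

variable {m p : ℕ}

lemma sigma_posL_lt (hpm : p < m) (σ : Equiv.Perm (Fin (m+1)))
    (h1 : σ (posM m p hpm) = Fin.last m) (k : Fin p) : (σ (posL m p hpm k)).val < m := by
  have hne : σ (posL m p hpm k) ≠ Fin.last m := by
    rw [← h1]
    intro h
    have := σ.injective h
    have : (posL m p hpm k).val = (posM m p hpm).val := by rw [this]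
    simp [posL, posM] at this
    omega
  have := (σ (posL m p hpm k)).isLt
  rcases Nat.lt_or_ge (σ (posL m p hpm k)).val m with h | h
  · exact h
  · exact absurd (Fin.ext (by omega : (σ (posL m p hpm k)).val = m)) hne

lemma sigma_posR_lt (hpm : p < m) (σ : Equiv.Perm (Fin (m+1)))
    (h1 : σ (posM m p hpm) = Fin.last m) (k : Fin (m-p)) : (σ (posR m p k)).val < m := by
  have hne : σ (posR m p k) ≠ Fin.last m := by
    rw [← h1]
    intro h
    have := σ.injective h
    have : (posR m p k).val = (posM m p hpm).val := by rw [this]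
    simp [posR, posM] at this
    omega
  have := (σ (posR m p k)).isLt
  rcases Nat.lt_or_ge (σ (posR m p k)).val m with h | h
  · exact h
  · exact absurd (Fin.ext (by omega : (σ (posR m p k)).val = m)) hne

lemma mem_Im (hpm : p < m) (σ : Equiv.Perm (Fin (m+1))) (k : Fin p) :
    low m (by omega) (σ (posL m p hpm k)) ∈ Im m p hpm σ :=
  Finset.mem_image.mpr ⟨k, Finset.mem_univ _, rfl⟩

lemma posR_not_mem_Im (hpm : p < m) (σ : Equiv.Perm (Fin (m+1)))
    (h1 : σ (posM m p hpm) = Fin.last m) (k : Fin (m-p)) :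
    low m (by omega) (σ (posR m p k)) ∉ Im m p hpm σ := by
  intro hmem
  obtain ⟨k', -, hk'⟩ := Finset.mem_image.mp hmem
  have hv : (σ (posL m p hpm k')).val = (σ (posR m p k)).val := by
    have e1 := low_val m (by omega) _ (sigma_posL_lt hpm σ h1 k')
    have e2 := low_val m (by omega) _ (sigma_posR_lt hpm σ h1 k)
    rw [← e1, ← e2]; exact congrArg Fin.val hk'
  have := σ.injective (Fin.ext hv)
  have : (posL m p hpm k').val = (posR m p k).val := by rw [this]
  simp [posL, posR] at this
  have := k'.isLt
  omega

lemma card_Im (hpm : p < m) (σ : Equiv.Perm (Fin (m+1)))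
    (h1 : σ (posM m p hpm) = Fin.last m) : (Im m p hpm σ).card = p := by
  unfold Im
  rw [Finset.card_image_of_injOn, Finset.card_univ, Fintype.card_fin]
  intro k1 _ k2 _ hk
  have hv : (σ (posL m p hpm k1)).val = (σ (posL m p hpm k2)).val := by
    have e1 := low_val m (by omega) _ (sigma_posL_lt hpm σ h1 k1)
    have e2 := low_val m (by omega) _ (sigma_posL_lt hpm σ h1 k2)
    rw [← e1, ← e2]; exact congrArg Fin.val hk
  have := σ.injective (Fin.ext hv)
  have : (posL m p hpm k1).val = (posL m p hpm k2).val := by rw [this]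
  simpa [posL, Fin.ext_iff] using this

noncomputable def alphaOf (hpm : p < m) (σ : Equiv.Perm (Fin (m+1)))
    (h1 : σ (posM m p hpm) = Fin.last m) (S : Finset (Fin m)) (hS : S.card = p)
    (h2 : Im m p hpm σ = S) : Equiv.Perm (Fin p) :=
  Equiv.ofBijective
    (fun k => (S.orderIsoOfFin hS).symm
      ⟨low m (by omega) (σ (posL m p hpm k)), h2 ▸ mem_Im hpm σ k⟩)
    (Finite.injective_iff_bijective.mp (by
      intro k1 k2 hk
      have hsub := (S.orderIsoOfFin hS).symm.injective hk
      have hlow := congrArg Subtype.val hsub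
      simp only at hlow
      have hv : (σ (posL m p hpm k1)).val = (σ (posL m p hpm k2)).val := by
        have e1 := low_val m (by omega) _ (sigma_posL_lt hpm σ h1 k1)
        have e2 := low_val m (by omega) _ (sigma_posL_lt hpm σ h1 k2)
        rw [← e1, ← e2]; exact congrArg Fin.val hlow
      have := σ.injective (Fin.ext hv)
      have : (posL m p hpm k1).val = (posL m p hpm k2).val := by rw [this]
      simpa [posL, Fin.ext_iff] using this))

set_option maxHeartbeats 1000000 in
noncomputable def betaOf (hpm : p < m) (σ : Equiv.Perm (Fin (m+1)))
    (h1 : σ (posM m p hpm) = Fin.last m) (S : Finset (Fin m)) (hS : S.card = p)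
    (h2 : Im m p hpm σ = S) : Equiv.Perm (Fin (m-p)) :=
  Equiv.ofBijective
    (fun k => (Sᶜ.orderIsoOfFin (card_compl_eq m p S hS)).symm
      ⟨low m (by omega) (σ (posR m p k)),
        Finset.mem_compl.mpr (by subst h2; exact posR_not_mem_Im hpm σ h1 k)⟩)
    (Finite.injective_iff_bijective.mp (by
      intro k1 k2 hk
      have hsub := (Sᶜ.orderIsoOfFin (card_compl_eq m p S hS)).symm.injective hk
      have hlow := congrArg Subtype.val hsub
      simp only at hlow
      have hv : (σ (posR m p k1)).val = (σ (posR m p k2)).val := by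
        have e1 := low_val m (by omega) _ (sigma_posR_lt hpm σ h1 k1)
        have e2 := low_val m (by omega) _ (sigma_posR_lt hpm σ h1 k2)
        rw [← e1, ← e2]; exact congrArg Fin.val hlow
      have := σ.injective (Fin.ext hv)
      have h3 : (posR m p k1).val = (posR m p k2).val := by rw [this]
      simp only [posR] at h3
      exact Fin.ext (by omega)))

lemma Fperm_posL (hpm : p < m) (S : Finset (Fin m)) (hS : S.card = p)
    (α : Equiv.Perm (Fin p)) (β : Equiv.Perm (Fin (m-p))) (k : Fin p) :
    Fperm m p hpm S hS α β (posL m p hpm k)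
      = Fin.castSucc (S.orderEmbOfFin hS (α k)) := by
  rw [Fperm_apply]; unfold Ffun
  rw [dif_pos (show (posL m p hpm k).val < p from k.isLt)]
  rfl

lemma Fperm_posM (hpm : p < m) (S : Finset (Fin m)) (hS : S.card = p)
    (α : Equiv.Perm (Fin p)) (β : Equiv.Perm (Fin (m-p))) :
    Fperm m p hpm S hS α β (posM m p hpm) = Fin.last m := by
  rw [Fperm_apply]; unfold Ffun
  rw [dif_neg (show ¬ (posM m p hpm).val < p by simp [posM]),
    dif_pos (show (posM m p hpm).val = p from rfl)]

lemma Fperm_posR (hpm : p < m) (S : Finset (Fin m)) (hS : S.card = p)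
    (α : Equiv.Perm (Fin p)) (β : Equiv.Perm (Fin (m-p))) (k : Fin (m-p)) :
    Fperm m p hpm S hS α β (posR m p k)
      = Fin.castSucc (Sᶜ.orderEmbOfFin (card_compl_eq m p S hS) (β k)) := by
  rw [Fperm_apply]; unfold Ffun
  have hk := k.isLt
  rw [dif_neg (show ¬ (posR m p k).val < p by simp [posR]; omega),
    dif_neg (show ¬ (posR m p k).val = p by simp [posR]; omega)]
  have hidx : (⟨(posR m p k).val - p - 1, by omega⟩ : Fin (m-p)) = k := by
    apply Fin.ext
    show p + 1 + k.val - p - 1 = k.val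
    omega
  rw [hidx]

lemma Im_Fperm (hpm : p < m) (S : Finset (Fin m)) (hS : S.card = p)
    (α : Equiv.Perm (Fin p)) (β : Equiv.Perm (Fin (m-p))) :
    Im m p hpm (Fperm m p hpm S hS α β) = S := by
  unfold Im
  ext y
  simp only [Finset.mem_image, Finset.mem_univ, true_and]
  constructor
  · rintro ⟨k, hk⟩
    rw [← hk, Fperm_posL, low_castSucc]
    exact Finset.orderEmbOfFin_mem _ _ _
  · intro hy
    have : y ∈ Set.range (S.orderEmbOfFin hS) := by
      rw [Finset.range_orderEmbOfFin]; exact hy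
    obtain ⟨x, rfl⟩ := this
    exact ⟨α.symm x, by rw [Fperm_posL, low_castSucc, Equiv.apply_symm_apply]⟩

lemma alphaOf_Fperm (hpm : p < m) (S : Finset (Fin m)) (hS : S.card = p)
    (α : Equiv.Perm (Fin p)) (β : Equiv.Perm (Fin (m-p)))
    (h1' : (Fperm m p hpm S hS α β) (posM m p hpm) = Fin.last m)
    (h2' : Im m p hpm (Fperm m p hpm S hS α β) = S) :
    alphaOf hpm (Fperm m p hpm S hS α β) h1' S hS h2' = α := by
  apply Equiv.ext
  intro k
  show (S.orderIsoOfFin hS).symm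
    ⟨low m (by omega) ((Fperm m p hpm S hS α β) (posL m p hpm k)),
      h2' ▸ mem_Im hpm _ k⟩ = α k
  have hy : (⟨low m (by omega : 0 < m) ((Fperm m p hpm S hS α β) (posL m p hpm k)),
      h2' ▸ mem_Im hpm _ k⟩ : {x // x ∈ S}) = (S.orderIsoOfFin hS) (α k) := by
    apply Subtype.ext
    rw [Finset.coe_orderIsoOfFin_apply]
    show low m _ _ = _
    rw [Fperm_posL, low_castSucc]
  rw [hy, OrderIso.symm_apply_apply]

lemma betaOf_Fperm (hpm : p < m) (S : Finset (Fin m)) (hS : S.card = p)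
    (α : Equiv.Perm (Fin p)) (β : Equiv.Perm (Fin (m-p)))
    (h1' : (Fperm m p hpm S hS α β) (posM m p hpm) = Fin.last m)
    (h2' : Im m p hpm (Fperm m p hpm S hS α β) = S) :
    betaOf hpm (Fperm m p hpm S hS α β) h1' S hS h2' = β := by
  apply Equiv.ext
  intro k
  show (Sᶜ.orderIsoOfFin (card_compl_eq m p S hS)).symm
    ⟨low m (by omega) ((Fperm m p hpm S hS α β) (posR m p k)), _⟩ = β k
  have hy : (⟨low m (by omega : 0 < m) ((Fperm m p hpm S hS α β) (posR m p k)),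
      Finset.mem_compl.mpr (h2' ▸ posR_not_mem_Im hpm _ h1' k)⟩ : {x // x ∈ Sᶜ})
      = (Sᶜ.orderIsoOfFin (card_compl_eq m p S hS)) (β k) := by
    apply Subtype.ext
    rw [Finset.coe_orderIsoOfFin_apply]
    show low m _ _ = _
    rw [Fperm_posR, low_castSucc]
  rw [hy, OrderIso.symm_apply_apply]

lemma Fperm_backward (hpm : p < m) (σ : Equiv.Perm (Fin (m+1)))
    (h1 : σ (posM m p hpm) = Fin.last m) (S : Finset (Fin m)) (hS : S.card = p)
    (h2 : Im m p hpm σ = S) :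
    Fperm m p hpm S hS (alphaOf hpm σ h1 S hS h2) (betaOf hpm σ h1 S hS h2) = σ := by
  apply Equiv.ext
  intro j
  rw [Fperm_apply]; unfold Ffun
  split_ifs with hj1 hj2
  · have hemb : S.orderEmbOfFin hS (alphaOf hpm σ h1 S hS h2 ⟨j.val, hj1⟩)
        = low m (by omega) (σ (posL m p hpm ⟨j.val, hj1⟩)) := by
      rw [← Finset.coe_orderIsoOfFin_apply]
      show ((S.orderIsoOfFin hS) ((S.orderIsoOfFin hS).symm _) : Fin m) = _
      rw [OrderIso.apply_symm_apply]
    rw [hemb, castSucc_low _ _ _ (sigma_posL_lt hpm σ h1 _)]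
    exact congrArg σ (Fin.ext rfl)
  · have hj : j = posM m p hpm := Fin.ext hj2
    rw [hj, h1]
  · have hemb : Sᶜ.orderEmbOfFin (card_compl_eq m p S hS)
        (betaOf hpm σ h1 S hS h2 ⟨j.val - p - 1, by omega⟩)
        = low m (by omega) (σ (posR m p ⟨j.val - p - 1, by omega⟩)) := by
      rw [← Finset.coe_orderIsoOfFin_apply]
      show ((Sᶜ.orderIsoOfFin (card_compl_eq m p S hS)) ((Sᶜ.orderIsoOfFin (card_compl_eq m p S hS)).symm _) : Fin m) = _
      rw [OrderIso.apply_symm_apply]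
    rw [hemb, castSucc_low _ _ _ (sigma_posR_lt hpm σ h1 _)]
    apply congrArg σ
    apply Fin.ext
    show p + 1 + (j.val - p - 1) = j.val
    omega

lemma prod_sum_eval (m p : ℕ) :
    (∑ x : Equiv.Perm (Fin p) × Equiv.Perm (Fin (m-p)),
      (-1:ℤ)^(permDesc x.1 + permDesc x.2 + 1))
    = -(phi p * phi (m-p)) := by
  rw [Fintype.sum_prod_type]
  simp_rw [pow_succ, pow_add]
  rw [phi, phi]
  rw [Finset.sum_mul_sum]
  simp [Finset.mul_sum, Finset.sum_mul]

lemma fiber_sum (m p : ℕ) (hp : 1 ≤ p) (hpm : p < m) (S : Finset (Fin m)) (hS : S.card = p) :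
    ∑ σ ∈ Finset.univ.filter (fun σ : Equiv.Perm (Fin (m+1)) =>
        σ (posM m p hpm) = Fin.last m ∧ Im m p hpm σ = S), (-1:ℤ)^(permDesc σ)
    = -(phi p * phi (m-p)) := by
  rw [Finset.sum_bij'
    (i := fun σ hσ => ((alphaOf hpm σ (Finset.mem_filter.mp hσ).2.1 S hS
                          (Finset.mem_filter.mp hσ).2.2),
                       (betaOf hpm σ (Finset.mem_filter.mp hσ).2.1 S hS
                          (Finset.mem_filter.mp hσ).2.2)))
    (j := fun x _ => Fperm m p hpm S hS x.1 x.2)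
    (hi := fun σ hσ => Finset.mem_univ _)
    (hj := fun x hx => Finset.mem_filter.mpr
      ⟨Finset.mem_univ _, Fperm_posM hpm S hS x.1 x.2, Im_Fperm hpm S hS x.1 x.2⟩)
    (g := fun x => (-1:ℤ)^(permDesc x.1 + permDesc x.2 + 1))
    ?_ ?_ ?_]
  · exact prod_sum_eval m p
  · intro σ hσ
    exact Fperm_backward hpm σ (Finset.mem_filter.mp hσ).2.1 S hS (Finset.mem_filter.mp hσ).2.2
  · intro x hx
    exact Prod.ext
      (alphaOf_Fperm hpm S hS x.1 x.2 (Fperm_posM hpm S hS x.1 x.2) (Im_Fperm hpm S hS x.1 x.2))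
      (betaOf_Fperm hpm S hS x.1 x.2 (Fperm_posM hpm S hS x.1 x.2) (Im_Fperm hpm S hS x.1 x.2))
  · intro σ hσ
    conv_lhs => rw [← Fperm_backward hpm σ (Finset.mem_filter.mp hσ).2.1 S hS
      (Finset.mem_filter.mp hσ).2.2]
    rw [permDesc_Fperm m p hp hpm]

lemma aux_sum (m p : ℕ) (hp : 1 ≤ p) (hpm : p < m) :
    ∑ σ ∈ Finset.univ.filter (fun σ : Equiv.Perm (Fin (m+1)) =>
        σ (posM m p hpm) = Fin.last m), (-1:ℤ)^(permDesc σ)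
    = -(m.choose p : ℤ) * phi p * phi (m-p) := by
  rw [← Finset.sum_fiberwise_of_maps_to (g := Im m p hpm)
    (t := Finset.powersetCard p Finset.univ)
    (fun σ hσ => Finset.mem_powersetCard_univ.mpr
      (card_Im hpm σ (Finset.mem_filter.mp hσ).2))]
  have hinner : ∀ S ∈ Finset.powersetCard p (Finset.univ : Finset (Fin m)),
      ∑ σ ∈ (Finset.univ.filter (fun σ : Equiv.Perm (Fin (m+1)) =>
          σ (posM m p hpm) = Fin.last m)).filter (fun σ => Im m p hpm σ = S),
        (-1:ℤ)^(permDesc σ) = -(phi p * phi (m-p)) := by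
    intro S hSmem
    rw [Finset.filter_filter]
    exact fiber_sum m p hp hpm S (Finset.mem_powersetCard_univ.mp hSmem)
  rw [Finset.sum_congr rfl hinner, Finset.sum_const, Finset.card_powersetCard,
    Finset.card_univ, Fintype.card_fin]
  push_cast
  ring


/-- for `n ≥ 3` and `2 ≤ i ≤ n-1`, the sum of `(-1)^{d(σ)}` over permutations
of `{1,…,n}` whose maximal value `n` occurs in position `i` equals
`-C(n-1, i-1) · φ(i-1) · φ(n-i)`. -/
theorem signed_sum_max_at_interior (n i : ℕ) (hn : 3 ≤ n) (hi : 2 ≤ i) (hi' : i ≤ n - 1) :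
    ∑ σ ∈ Finset.univ.filter
        (fun σ : Equiv.Perm (Fin n) =>
          σ ⟨i - 1, by omega⟩ = ⟨n - 1, by omega⟩),
      (-1 : ℤ) ^ permDesc σ
      = -((n - 1).choose (i - 1) : ℤ) * phi (i - 1) * phi (n - i) := by
  obtain ⟨m, rfl⟩ : ∃ m, n = m + 1 := ⟨n - 1, by omega⟩
  have h2 : phi (m + 1 - i) = phi (m - (i - 1)) := by
    congr 1; omega
  rw [h2]
  have hpm : i - 1 < m := by omega
  show _ = -((m.choose (i-1) : ℤ)) * phi (i - 1) * phi (m - (i - 1))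
  have := aux_sum m (i - 1) (by omega) hpm
  rw [← this]
  apply Finset.sum_congr
  · apply Finset.filter_congr
    intro σ _
    have e1 : (⟨i - 1, by omega⟩ : Fin (m+1)) = posM m (i-1) hpm := rfl
    have e2 : (⟨m + 1 - 1, by omega⟩ : Fin (m+1)) = Fin.last m := rfl
    rw [e1, e2]
  · intro _ _; rfl
end

section
/- Let φ(n) = Σ_{σ ∈ S_n} (-1)^{d(σ)} with φ(0) = 1. Then for all n ≥ 3: φ(n)/n! = -(1/n) · Σ_{i=2}^{n-1} (φ(i-1)/(i-1)!) · (φ(n-i)/(n-i)!). -/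
namespace SDAux

open List Finset

def sgn (w : List ℕ) : ℤ := (-1) ^ descList w

def perms (l : List ℕ) : Finset (List ℕ) := l.permutations.toFinset

lemma mem_perms {w l : List ℕ} : w ∈ perms l ↔ w ~ l := by
  simp [perms, List.mem_permutations]

noncomputable def W (l : List ℕ) : ℤ := ∑ w ∈ perms l, sgn w

noncomputable def Phi (n : ℕ) : ℤ := W (List.range n)

lemma descList_cons_cons (x y : ℕ) (t : List ℕ) :
    descList (x :: y :: t) = descList (y :: t) + (if y < x then 1 else 0) := by
  simp [descList, List.countP_cons]

lemma descList_cons_max (m : ℕ) (b : List ℕ) (hb : ∀ x ∈ b, x < m) :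
    descList (m :: b) = descList b + (if b = [] then 0 else 1) := by
  cases b with
  | nil => rfl
  | cons y t =>
    rw [descList_cons_cons]
    simp [hb y (by simp)]

lemma descList_append_cons (a : List ℕ) (m : ℕ) (b : List ℕ) (ha : ∀ x ∈ a, x < m) :
    descList (a ++ m :: b) = descList a + descList (m :: b) := by
  induction a with
  | nil => simp [descList]
  | cons x a ih =>
    cases a with
    | nil =>
      simp only [List.nil_append, List.cons_append]
      rw [descList_cons_cons]
      have : ¬ m < x := by have := ha x (by simp); omega
      simp [this, descList]
    | cons y a' =>
      have h' : ∀ z ∈ y :: a', z < m := fun z hz => ha z (by simp [hz])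
      simp only [List.cons_append] at *
      rw [descList_cons_cons, ih h', descList_cons_cons]
      ring

lemma descList_map (f : ℕ → ℕ) (w : List ℕ)
    (hf : ∀ x ∈ w, ∀ y ∈ w, (f x < f y ↔ x < y)) :
    descList (w.map f) = descList w := by
  unfold descList
  rw [← List.map_tail, List.zip_map, List.countP_map]
  apply List.countP_congr
  rintro ⟨x, y⟩ hp
  obtain ⟨hx, hy⟩ := List.of_mem_zip hp
  have hy' := List.mem_of_mem_tail hy
  simp only [Function.comp, Prod.map, decide_eq_true_eq]
  exact hf y hy' x hx

lemma sgn_map (f : ℕ → ℕ) (w : List ℕ)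
    (hf : ∀ x ∈ w, ∀ y ∈ w, (f x < f y ↔ x < y)) : sgn (w.map f) = sgn w := by
  rw [sgn, sgn, descList_map f w hf]

lemma perms_congr {l l' : List ℕ} (h : l ~ l') : perms l = perms l' := by
  ext w; simp only [mem_perms]
  exact ⟨fun h' => h'.trans h, fun h' => h'.trans h.symm⟩

lemma W_congr {l l' : List ℕ} (h : l ~ l') : W l = W l' := by
  rw [W, W, perms_congr h]

lemma W_eq_Phi {l : List ℕ} (hl : l.Nodup) : W l = Phi l.length := by
  classical
  set n := l.length with hn
  set s := l.mergeSort (fun a b => decide (a ≤ b)) with hs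
  have hsp : s ~ l := List.mergeSort_perm l _
  have hsn : s.Nodup := hsp.nodup_iff.mpr hl
  have hslen : s.length = n := hsp.length_eq
  have hsorted : s.Pairwise (· ≤ ·) := List.pairwise_mergeSort' (· ≤ ·) l
  have hlt : s.Pairwise (· < ·) :=
    List.sortedLT_iff_pairwise.mp ((List.sortedLE_iff_pairwise.mpr hsorted).sortedLT_of_nodup hsn)
  set f : ℕ → ℕ := fun i => s.getD i 0 with hf
  have hpw : ∀ i j, i < j → j < n → f i < f j := by
    intro i j hij hj
    have hi' : i < s.length := by omega
    have hj' : j < s.length := by omega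
    have := List.pairwise_iff_getElem.mp hlt i j hi' hj' hij
    show s.getD i 0 < s.getD j 0
    rwa [List.getD_eq_getElem s 0 hi', List.getD_eq_getElem s 0 hj']
  set g : ℕ → ℕ := fun y => s.idxOf y with hg
  have hflt : ∀ i j, i < n → j < n → (f i < f j ↔ i < j) := by
    intro i j hi hj
    constructor
    · intro h
      by_contra hc
      push_neg at hc
      rcases Nat.lt_or_ge j i with h2 | h2
      · exact absurd (hpw j i h2 hi) (by omega)
      · have : i = j := by omega
        subst this; exact absurd h (lt_irrefl _)
    · intro h; exact hpw i j h hj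
  have hmapf : (List.range n).map f = s := by
    apply List.ext_getElem
    · simp [hslen]
    · intro i h1 h2
      have hi : i < n := by simpa using h1
      simp only [List.getElem_map, List.getElem_range]
      exact List.getD_eq_getElem s 0 h2
  have hgf : ∀ i, i < n → g (f i) = i := by
    intro i hi
    have hi' : i < s.length := by omega
    have hmem : s[i] ∈ s := List.getElem_mem _
    have hidx : s.idxOf s[i] < s.length := List.idxOf_lt_length_iff.mpr hmem
    have := List.getElem_idxOf hidx
    have := (hsn.getElem_inj_iff (hi := hidx) (hj := hi')).mp this
    show s.idxOf (s.getD i 0) = i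
    rw [List.getD_eq_getElem s 0 hi']
    exact this
  have hfg : ∀ y, y ∈ s → f (g y) = y := by
    intro y hy
    have hidx : s.idxOf y < s.length := List.idxOf_lt_length_iff.mpr hy
    show s.getD (s.idxOf y) 0 = y
    rw [List.getD_eq_getElem s 0 hidx]
    exact List.getElem_idxOf hidx
  have hmapg : s.map g = List.range n := by
    apply List.ext_getElem
    · simp [hslen]
    · intro i h1 h2
      have hi' : i < s.length := by simpa using h1
      simp only [List.getElem_map, List.getElem_range]
      show s.idxOf s[i] = i
      have h3 : f i = s[i] := List.getD_eq_getElem s 0 hi'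
      have := hgf i (by omega)
      rw [h3] at this
      exact this
  have key : W (List.range n) = W l := by
    rw [W, W]
    refine Finset.sum_bij' (fun w _ => w.map f) (fun v _ => v.map g) ?_ ?_ ?_ ?_ ?_
    · intro w hw
      rw [mem_perms] at hw ⊢
      calc w.map f ~ (List.range n).map f := hw.map f
        _ = s := hmapf
        _ ~ l := hsp
    · intro v hv
      rw [mem_perms] at hv ⊢
      calc v.map g ~ s.map g := (hv.trans hsp.symm).map g
        _ = List.range n := hmapg
    · intro w hw
      rw [mem_perms] at hw
      show (w.map f).map g = w
      rw [List.map_map]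
      have : ∀ x ∈ w, (g ∘ f) x = id x := by
        intro x hx
        have : x ∈ List.range n := hw.mem_iff.mp hx
        exact hgf x (by simpa using this)
      rw [List.map_congr_left this, List.map_id]
    · intro v hv
      rw [mem_perms] at hv
      show (v.map g).map f = v
      rw [List.map_map]
      have : ∀ x ∈ v, (f ∘ g) x = id x := by
        intro x hx
        have : x ∈ s := (hv.trans hsp.symm).mem_iff.mp hx
        exact hfg x this
      rw [List.map_congr_left this, List.map_id]
    · intro w hw
      rw [mem_perms] at hw
      refine (sgn_map f w ?_).symm
      intro x hx y hy
      have hx' : x < n := by simpa using hw.mem_iff.mp hx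
      have hy' : y < n := by simpa using hw.mem_iff.mp hy
      exact hflt x y hx' hy'
  rw [Phi, key]
lemma mem_A {m k : ℕ} (hk : k ≤ m) {a : List ℕ} :
    a ∈ (perms (List.range m)).image (List.take k) ↔
      (a.Nodup ∧ a.length = k ∧ ∀ x ∈ a, x < m) := by
  constructor
  · intro ha
    obtain ⟨u, hu, rfl⟩ := Finset.mem_image.mp ha
    rw [mem_perms] at hu
    have hun : u.Nodup := hu.nodup_iff.mpr (List.nodup_range (n := m))
    have hul : u.length = m := by simpa using hu.length_eq
    refine ⟨(List.take_sublist k u).nodup hun, by simp [hul, hk], ?_⟩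
    intro x hx
    have : x ∈ u := (List.take_sublist k u).mem hx
    simpa using hu.mem_iff.mp this
  · rintro ⟨hnd, hlen, hmem⟩
    have hsub : a ⊆ List.range m := fun x hx => by
      simpa using hmem x hx
    obtain ⟨l', hl', hsl⟩ := List.subperm_of_subset hnd hsub
    obtain ⟨t, ht⟩ := hsl.exists_perm_append
    have hperm : a ++ t ~ List.range m := by
      calc a ++ t ~ l' ++ t := (hl'.symm.append_right t)
        _ ~ List.range m := ht.symm
    refine Finset.mem_image.mpr ⟨a ++ t, mem_perms.mpr hperm, ?_⟩
    exact List.take_left' hlen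

lemma fiber_drop {m k : ℕ} (hk : k ≤ m) {a : List ℕ}
    (hnd : a.Nodup) (hlen : a.length = k) (hmem : ∀ x ∈ a, x < m) :
    ∑ u ∈ (perms (List.range m)).filter (fun u => u.take k = a), sgn (u.drop k)
      = Phi (m - k) := by
  classical
  set compl := (List.range m).filter (fun x => decide (x ∉ a)) with hcompl
  have hcnd : compl.Nodup := (List.nodup_range (n := m)).filter _
  have hca : (a ++ compl).Nodup := by
    rw [List.nodup_append]
    refine ⟨hnd, hcnd, ?_⟩
    intro x hx y hx'
    have := List.of_mem_filter hx'
    simp at this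
    rintro rfl
    exact this hx
  have hcperm : a ++ compl ~ List.range m := by
    apply List.perm_of_nodup_nodup_toFinset_eq hca (List.nodup_range (n := m))
    ext x
    simp only [List.mem_toFinset, List.mem_append, List.mem_range, hcompl,
      List.mem_filter, decide_eq_true_eq]
    constructor
    · rintro (h | ⟨h, _⟩)
      · exact hmem x h
      · simpa using h
    · intro h
      by_cases hxa : x ∈ a
      · exact Or.inl hxa
      · exact Or.inr ⟨by simpa using h, by simpa using hxa⟩
  have hclen : compl.length = m - k := by
    have := hcperm.length_eq
    simp only [List.length_append, hlen, List.length_range] at this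
    omega
  have key : ∑ u ∈ (perms (List.range m)).filter (fun u => u.take k = a), sgn (u.drop k)
      = ∑ b ∈ perms compl, sgn b := by
    refine Finset.sum_bij' (fun u _ => u.drop k) (fun b _ => a ++ b) ?_ ?_ ?_ ?_ ?_
    · intro u hu
      rw [Finset.mem_filter] at hu
      obtain ⟨hu1, hu2⟩ := hu
      rw [mem_perms] at hu1 ⊢
      have hun : u.Nodup := hu1.nodup_iff.mpr (List.nodup_range (n := m))
      have hudecomp : a ++ u.drop k = u := by rw [← hu2]; exact List.take_append_drop k u
      apply List.perm_of_nodup_nodup_toFinset_eq ((List.drop_sublist k u).nodup hun) hcnd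
      ext x
      simp only [List.mem_toFinset, hcompl, List.mem_filter, List.mem_range,
        decide_eq_true_eq]
      constructor
      · intro hx
        have hxu : x ∈ u := (List.drop_sublist k u).mem hx
        have hxr : x < m := by simpa using hu1.mem_iff.mp hxu
        have hxna : x ∉ a := by
          rw [← hudecomp] at hun
          rw [List.nodup_append] at hun
          exact fun hxa => hun.2.2 x hxa x hx rfl
        exact ⟨hxr, by simpa using hxna⟩
      · rintro ⟨hxr, hxna⟩
        have hxu : x ∈ u := hu1.mem_iff.mpr (by simpa using hxr)
        rw [← hudecomp] at hxu
        rcases List.mem_append.mp hxu with h | h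
        · exact absurd h (by simpa using hxna)
        · exact h
    · intro b hb
      rw [mem_perms] at hb
      rw [Finset.mem_filter, mem_perms]
      constructor
      · calc a ++ b ~ a ++ compl := hb.append_left a
          _ ~ List.range m := hcperm
      · exact List.take_left' hlen
    · intro u hu
      rw [Finset.mem_filter] at hu
      show a ++ u.drop k = u
      conv_rhs => rw [← List.take_append_drop k u, hu.2]
    · intro b _
      exact List.drop_left' hlen
    · intro u _; rfl
  rw [key, ← W, W_eq_Phi hcnd, hclen]

lemma sum_A {m k : ℕ} (hk : k ≤ m) :
    ∑ a ∈ (perms (List.range m)).image (List.take k), sgn a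
      = (m.choose k) * Phi k := by
  classical
  set A := (perms (List.range m)).image (List.take k) with hA
  have hmaps : ∀ a ∈ A, a.toFinset ∈ Finset.powersetCard k (Finset.range m) := by
    intro a ha
    obtain ⟨hnd, hlen, hmem⟩ := (mem_A hk).mp ha
    rw [Finset.mem_powersetCard]
    constructor
    · intro x hx
      rw [List.mem_toFinset] at hx
      exact Finset.mem_range.mpr (hmem x hx)
    · rw [List.toFinset_card_of_nodup hnd, hlen]
  rw [← Finset.sum_fiberwise_of_maps_to hmaps sgn]
  have hfiber : ∀ T ∈ Finset.powersetCard k (Finset.range m),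
      A.filter (fun a => a.toFinset = T) = perms (T.sort (· ≤ ·)) := by
    intro T hT
    rw [Finset.mem_powersetCard] at hT
    ext a
    rw [Finset.mem_filter, mem_perms]
    constructor
    · rintro ⟨haA, haT⟩
      obtain ⟨hnd, hlen, hmem⟩ := (mem_A hk).mp haA
      apply List.perm_of_nodup_nodup_toFinset_eq hnd (Finset.sort_nodup _ _)
      rw [haT, Finset.sort_toFinset]
    · intro hperm
      have hnd : a.Nodup := hperm.nodup_iff.mpr (Finset.sort_nodup _ _)
      have hlen : a.length = k := by
        rw [hperm.length_eq, Finset.length_sort, hT.2]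
      have htf : a.toFinset = T := by
        rw [← Finset.sort_toFinset (s := T) (r := (· ≤ ·))]
        exact List.toFinset_eq_of_perm _ _ hperm
      refine ⟨(mem_A hk).mpr ⟨hnd, hlen, ?_⟩, htf⟩
      intro x hx
      have : x ∈ T := by
        rw [← htf]; exact List.mem_toFinset.mpr hx
      exact Finset.mem_range.mp (hT.1 this)
  calc ∑ T ∈ Finset.powersetCard k (Finset.range m), ∑ a ∈ A.filter (fun a => a.toFinset = T), sgn a
      = ∑ T ∈ Finset.powersetCard k (Finset.range m), Phi k := by
        apply Finset.sum_congr rfl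
        intro T hT
        rw [hfiber T hT, ← W, W_eq_Phi (Finset.sort_nodup _ _),
          Finset.length_sort, (Finset.mem_powersetCard.mp hT).2]
    _ = (m.choose k) * Phi k := by
        rw [Finset.sum_const, Finset.card_powersetCard, Finset.card_range, nsmul_eq_mul]

lemma split_sum {m k : ℕ} (hk : k ≤ m) :
    ∑ u ∈ perms (List.range m), sgn (u.take k) * sgn (u.drop k)
      = (m.choose k) * Phi k * Phi (m - k) := by
  classical
  set A := (perms (List.range m)).image (List.take k) with hA
  have hmaps : ∀ u ∈ perms (List.range m), u.take k ∈ A :=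
    fun u hu => Finset.mem_image_of_mem _ hu
  rw [← Finset.sum_fiberwise_of_maps_to hmaps (fun u => sgn (u.take k) * sgn (u.drop k))]
  have step : ∀ a ∈ A, ∑ u ∈ (perms (List.range m)).filter (fun u => u.take k = a),
      sgn (u.take k) * sgn (u.drop k) = sgn a * Phi (m - k) := by
    intro a ha
    obtain ⟨hnd, hlen, hmem⟩ := (mem_A hk).mp ha
    have : ∀ u ∈ (perms (List.range m)).filter (fun u => u.take k = a),
        sgn (u.take k) * sgn (u.drop k) = sgn a * sgn (u.drop k) := by
      intro u hu
      rw [(Finset.mem_filter.mp hu).2]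
    rw [Finset.sum_congr rfl this, ← Finset.mul_sum, fiber_drop hk hnd hlen hmem]
  rw [Finset.sum_congr rfl step, ← Finset.sum_mul, sum_A hk]
lemma Phi_zero : Phi 0 = 1 := by
  have : perms (List.range 0) = {[]} := by
    ext w
    rw [mem_perms]
    simp [List.range_zero]
  rw [Phi, W, this]
  simp [sgn, descList]

lemma phi_eq_Phi (n : ℕ) : phi n = Phi n := by
  classical
  set wordOf : Equiv.Perm (Fin n) → List ℕ :=
    fun σ => (List.finRange n).map fun i => ((σ i : Fin n) : ℕ) with hword
  have hw_perm : ∀ σ, wordOf σ ~ List.range n := by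
    intro σ
    apply List.perm_of_nodup_nodup_toFinset_eq _ (List.nodup_range (n := n))
    · ext x
      simp only [List.mem_toFinset, hword, List.mem_map, List.mem_range]
      constructor
      · rintro ⟨i, _, rfl⟩; exact (σ i).isLt
      · intro hx
        exact ⟨σ.symm ⟨x, hx⟩, List.mem_finRange _, by simp⟩
    · apply List.Nodup.map
      · intro a b hab
        exact σ.injective (Fin.val_injective hab)
      · exact List.nodup_finRange n
  have hinj : Function.Injective wordOf := by
    intro σ τ h
    apply Equiv.ext
    intro i
    simp only [hword] at h
    have h2 := List.map_inj_left.mp h i (List.mem_finRange i)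
    exact Fin.val_injective h2
  have himg : Finset.univ.image wordOf = perms (List.range n) := by
    apply Finset.eq_of_subset_of_card_le
    · intro w hw
      obtain ⟨σ, _, rfl⟩ := Finset.mem_image.mp hw
      exact mem_perms.mpr (hw_perm σ)
    · rw [Finset.card_image_of_injective _ hinj]
      have h1 : (perms (List.range n)).card = n.factorial := by
        rw [perms, List.toFinset_card_of_nodup
          (List.nodup_permutations _ (List.nodup_range (n := n))), List.length_permutations,
          List.length_range]
      rw [h1, Finset.card_univ, Fintype.card_perm, Fintype.card_fin]
  rw [Phi, W, ← himg, Finset.sum_image (fun x _ y _ h => hinj h)]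
  rfl
lemma insert_bij (m : ℕ) :
    Phi (m + 1) = ∑ p ∈ (Finset.range (m+1)) ×ˢ perms (List.range m),
      sgn (p.2.take p.1 ++ m :: p.2.drop p.1) := by
  classical
  rw [Phi, W]
  refine Finset.sum_bij' (fun w _ => (w.idxOf m, w.take (w.idxOf m) ++ w.drop (w.idxOf m + 1)))
    (fun p _ => p.2.take p.1 ++ m :: p.2.drop p.1) ?_ ?_ ?_ ?_ ?_
  · -- maps into product
    intro w hw
    rw [mem_perms] at hw
    have hmw : m ∈ w := hw.mem_iff.mpr (by simp)
    have hlw : w.length = m + 1 := by simpa using hw.length_eq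
    have hk : w.idxOf m < w.length := List.idxOf_lt_length_iff.mpr hmw
    have hget : w[w.idxOf m] = m := List.getElem_idxOf hk
    have hdecomp : w = w.take (w.idxOf m) ++ m :: w.drop (w.idxOf m + 1) := by
      conv_lhs => rw [← List.take_append_drop (w.idxOf m) w]
      congr 1
      rw [← List.getElem_cons_drop hk, hget]
    rw [Finset.mem_product, Finset.mem_range, mem_perms]
    refine ⟨by omega, ?_⟩
    have h1 : m :: (w.take (w.idxOf m) ++ w.drop (w.idxOf m + 1)) ~ w := by
      calc m :: (w.take (w.idxOf m) ++ w.drop (w.idxOf m + 1))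
          ~ w.take (w.idxOf m) ++ m :: w.drop (w.idxOf m + 1) := List.perm_middle.symm
        _ = w := hdecomp.symm
    have h2 : w ~ m :: List.range m := by
      calc w ~ List.range (m+1) := hw
        _ = List.range m ++ [m] := by rw [List.range_succ]
        _ ~ m :: List.range m := List.perm_append_singleton m _
    exact (h1.trans h2).cons_inv
  · -- reverse maps in
    rintro ⟨k, u⟩ hp
    rw [Finset.mem_product, Finset.mem_range, mem_perms] at hp
    obtain ⟨hk, hu⟩ := hp
    rw [mem_perms]
    calc u.take k ++ m :: u.drop k ~ m :: (u.take k ++ u.drop k) := List.perm_middle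
      _ = m :: u := by rw [List.take_append_drop]
      _ ~ m :: List.range m := hu.cons m
      _ ~ List.range m ++ [m] := (List.perm_append_singleton m _).symm
      _ = List.range (m+1) := by rw [List.range_succ]
  · -- left inverse
    intro w hw
    rw [mem_perms] at hw
    have hmw : m ∈ w := hw.mem_iff.mpr (by simp)
    have hk : w.idxOf m < w.length := List.idxOf_lt_length_iff.mpr hmw
    have hget : w[w.idxOf m] = m := List.getElem_idxOf hk
    show (w.take (w.idxOf m) ++ w.drop (w.idxOf m + 1)).take (w.idxOf m) ++
        m :: (w.take (w.idxOf m) ++ w.drop (w.idxOf m + 1)).drop (w.idxOf m) = w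
    have hlt : (w.take (w.idxOf m)).length = w.idxOf m := by
      rw [List.length_take]; omega
    rw [List.take_left' hlt, List.drop_left' hlt]
    conv_rhs => rw [← List.take_append_drop (w.idxOf m) w]
    congr 1
    rw [← List.getElem_cons_drop hk, hget]
  · -- right inverse
    rintro ⟨k, u⟩ hp
    rw [Finset.mem_product, Finset.mem_range, mem_perms] at hp
    obtain ⟨hk, hu⟩ := hp
    have hul : u.length = m := by simpa using hu.length_eq
    have hmem : ∀ x ∈ u, x < m := fun x hx => by simpa using hu.mem_iff.mp hx
    have hmnotin : m ∉ u.take k := fun hc =>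
      absurd (hmem m ((List.take_sublist k u).mem hc)) (lt_irrefl m)
    have hlt : (u.take k).length = k := by
      rw [List.length_take]; omega
    have hidx : (u.take k ++ m :: u.drop k).idxOf m = k := by
      rw [List.idxOf_append_of_notMem hmnotin, hlt]
      simp
    show ((u.take k ++ m :: u.drop k).idxOf m,
        (u.take k ++ m :: u.drop k).take ((u.take k ++ m :: u.drop k).idxOf m) ++
        (u.take k ++ m :: u.drop k).drop ((u.take k ++ m :: u.drop k).idxOf m + 1)) = (k, u)
    rw [hidx]
    have h1 : (u.take k ++ m :: u.drop k).take k = u.take k := List.take_left' hlt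
    have h2 : (u.take k ++ m :: u.drop k).drop (k + 1) = u.drop k := by
      have : u.take k ++ m :: u.drop k = (u.take k ++ [m]) ++ u.drop k := by simp
      rw [this, List.drop_left' (by simp [hlt])]
    rw [h1, h2, List.take_append_drop]
  · -- values
    intro w hw
    rw [mem_perms] at hw
    have hmw : m ∈ w := hw.mem_iff.mpr (by simp)
    have hk : w.idxOf m < w.length := List.idxOf_lt_length_iff.mpr hmw
    have hget : w[w.idxOf m] = m := List.getElem_idxOf hk
    show sgn w = sgn ((w.take (w.idxOf m) ++ w.drop (w.idxOf m + 1)).take (w.idxOf m) ++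
        m :: (w.take (w.idxOf m) ++ w.drop (w.idxOf m + 1)).drop (w.idxOf m))
    have hlt : (w.take (w.idxOf m)).length = w.idxOf m := by
      rw [List.length_take]; omega
    rw [List.take_left' hlt, List.drop_left' hlt]
    congr 1
    conv_lhs => rw [← List.take_append_drop (w.idxOf m) w]
    congr 1
    rw [← List.getElem_cons_drop hk, hget]

lemma Phi_rec (m : ℕ) :
    Phi (m + 1) = Phi m - ∑ k ∈ Finset.range m, (m.choose k) * Phi k * Phi (m - k) := by
  classical
  rw [insert_bij, Finset.sum_product, Finset.sum_range_succ]
  have hterm : ∀ k ∈ Finset.range (m+1), ∀ u ∈ perms (List.range m),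
      sgn (u.take k ++ m :: u.drop k)
        = (if k = m then 1 else -1) * (sgn (u.take k) * sgn (u.drop k)) := by
    intro k hk u hu
    rw [Finset.mem_range] at hk
    rw [mem_perms] at hu
    have hul : u.length = m := by simpa using hu.length_eq
    have hmem : ∀ x ∈ u, x < m := fun x hx => by simpa using hu.mem_iff.mp hx
    have htmem : ∀ x ∈ u.take k, x < m := fun x hx => hmem x ((List.take_sublist k u).mem hx)
    have hdmem : ∀ x ∈ u.drop k, x < m := fun x hx => hmem x ((List.drop_sublist k u).mem hx)
    have hnil : (u.drop k = []) ↔ k = m := by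
      rw [List.drop_eq_nil_iff]
      omega
    rw [sgn, descList_append_cons _ _ _ htmem, descList_cons_max _ _ hdmem]
    by_cases hkm : k = m
    · rw [if_pos (hnil.mpr hkm), if_pos hkm]
      rw [sgn, sgn, pow_add, pow_add, pow_zero]
      ring
    · rw [if_neg (fun hc => hkm (hnil.mp hc)), if_neg hkm]
      rw [sgn, sgn, pow_add, pow_add, pow_one]
      ring
  have hmain : ∀ k ∈ Finset.range (m+1),
      ∑ u ∈ perms (List.range m), sgn (u.take k ++ m :: u.drop k)
        = (if k = m then 1 else -1) * ((m.choose k) * Phi k * Phi (m - k)) := by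
    intro k hk
    rw [Finset.mem_range] at hk
    calc ∑ u ∈ perms (List.range m), sgn (u.take k ++ m :: u.drop k)
        = ∑ u ∈ perms (List.range m), (if k = m then 1 else -1) * (sgn (u.take k) * sgn (u.drop k)) :=
          Finset.sum_congr rfl (fun u hu => hterm k (by simp; omega) u hu)
      _ = (if k = m then 1 else -1) * ∑ u ∈ perms (List.range m), sgn (u.take k) * sgn (u.drop k) := by
          rw [Finset.mul_sum]
      _ = (if k = m then 1 else -1) * ((m.choose k) * Phi k * Phi (m - k)) := by
          rw [split_sum (by omega)]
  have h1 : ∀ k ∈ Finset.range m,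
      (∑ u ∈ perms (List.range m), sgn (u.take k ++ m :: u.drop k))
        = -((m.choose k : ℤ) * Phi k * Phi (m - k)) := by
    intro k hk
    rw [Finset.mem_range] at hk
    rw [hmain k (by rw [Finset.mem_range]; omega), if_neg (by omega)]
    ring
  rw [Finset.sum_congr rfl h1, hmain m (by rw [Finset.mem_range]; omega), if_pos rfl,
    Nat.choose_self, Nat.sub_self, Phi_zero, Finset.sum_neg_distrib]
  push_cast
  ring
lemma phi_zero : phi 0 = 1 := by rw [phi_eq_Phi, Phi_zero]

lemma phi_rec' {m : ℕ} (hm : 1 ≤ m) :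
    phi (m + 1) = - ∑ k ∈ Finset.Icc 1 (m - 1), ((m.choose k : ℤ) * phi k * phi (m - k)) := by
  have h0 : phi (m+1) = phi m - ∑ k ∈ Finset.range m, ((m.choose k : ℤ) * phi k * phi (m-k)) := by
    rw [phi_eq_Phi, Phi_rec m, ← phi_eq_Phi]
    congr 1
    apply Finset.sum_congr rfl
    intro k _
    rw [phi_eq_Phi, phi_eq_Phi]
  have hins : Finset.range m = insert 0 (Finset.Icc 1 (m-1)) := by
    ext x
    simp only [Finset.mem_range, Finset.mem_insert, Finset.mem_Icc]
    omega
  rw [h0, hins, Finset.sum_insert (by simp)]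
  simp only [Nat.choose_zero_right, Nat.cast_one, one_mul, phi_zero, Nat.sub_zero]
  ring
end SDAux

/-- the recursion `φ(n)/n! = -(1/n) Σ_{i=2}^{n-1} φ(i-1)/(i-1)! · φ(n-i)/(n-i)!`
for all `n ≥ 3`. -/
theorem phi_recursion (n : ℕ) (hn : 3 ≤ n) :
    (phi n : ℚ) / n.factorial
      = -(1 / (n : ℚ)) * ∑ i ∈ Finset.Icc 2 (n - 1),
          ((phi (i - 1) : ℚ) / (i - 1).factorial) * ((phi (n - i) : ℚ) / (n - i).factorial) := by
  obtain ⟨m, rfl⟩ : ∃ m, n = m + 1 := ⟨n - 1, by omega⟩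
  have hm : 2 ≤ m := by omega
  have hre : ∑ i ∈ Finset.Icc 2 (m + 1 - 1),
        ((phi (i - 1) : ℚ) / (i - 1).factorial) * ((phi (m + 1 - i) : ℚ) / (m + 1 - i).factorial)
      = ∑ k ∈ Finset.Icc 1 (m - 1),
        ((phi k : ℚ) / k.factorial) * ((phi (m - k) : ℚ) / (m - k).factorial) := by
    refine Finset.sum_bij' (fun i _ => i - 1) (fun k _ => k + 1) ?_ ?_ ?_ ?_ ?_
    · intro i hi; simp only [Finset.mem_Icc] at hi ⊢; omega
    · intro k hk; simp only [Finset.mem_Icc] at hk ⊢; omega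
    · intro i hi; simp only [Finset.mem_Icc] at hi; show i - 1 + 1 = i; omega
    · intro k hk; simp only [Finset.mem_Icc] at hk; show k + 1 - 1 = k; omega
    · intro i hi
      simp only [Finset.mem_Icc] at hi
      have h1 : m + 1 - i = m - (i - 1) := by omega
      rw [h1]
  rw [hre, SDAux.phi_rec' (by omega)]
  push_cast
  rw [neg_div, Finset.sum_div, neg_mul, Finset.mul_sum, neg_inj]
  apply Finset.sum_congr rfl
  intro k hk
  simp only [Finset.mem_Icc] at hk
  have hkm : k ≤ m := by omega
  rw [Nat.cast_choose ℚ hkm, Nat.factorial_succ]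
  have h1 : (k.factorial : ℚ) ≠ 0 := by positivity
  have h2 : ((m - k).factorial : ℚ) ≠ 0 := by positivity
  have h3 : (m.factorial : ℚ) ≠ 0 := by positivity
  have h4 : ((m : ℚ) + 1) ≠ 0 := by positivity
  push_cast
  field_simp
end
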